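/- Consider the discrete-time quantum walk search on the n-dimensional hypercube (N = 2ⁿ vertices, n ≥ 2), with state space the functions ψ : ((Fin n → Bool) × Fin n) → ℂ. Suppose the marked set is M = {i, j} where the binary strings i and j differ exactly in bit 0 (so i and j are adjacent along direction 0). Let φ = a·Σ_{v,c}|v,c⟩ − an·(|i,0⟩ + |j,0⟩), i.e. the state with amplitude −(n−1)a on |i,0⟩ and |j,0⟩ and amplitude a on every other basis state. Then φ is fixed by one step of the search algorithm: U′φ = φ, where U′ = S·(I⊗C)·(Q⊗I). -/
import Mathlib


/-- Discrete-time quantum walk on the `n`-dimensional hypercube.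
Vertices are binary strings `v : Fin n → Bool`; basis states are `(v, c)` with coin
direction `c : Fin n`. `flipBit v c` flips bit `c` of `v` (i.e. `v ⊕ e_c`). -/
def HypercubeWalk.flipBit (n : ℕ) (v : Fin n → Bool) (c : Fin n) : Fin n → Bool :=
  Function.update v c (!(v c))

/-- The shift operator `S`, with `S|v, c⟩ = |v ⊕ e_c, c⟩`. -/
noncomputable def HypercubeWalk.shift (n : ℕ) (ψ : (Fin n → Bool) × Fin n → ℂ) :
    (Fin n → Bool) × Fin n → ℂ :=
  fun e => ψ (HypercubeWalk.flipBit n e.1 e.2, e.2)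

/-- The Grover coin `I ⊗ C`, `(Cψ)(v, c) = (2/n) Σ_{c'} ψ(v, c') − ψ(v, c)`. -/
noncomputable def HypercubeWalk.coin (n : ℕ) (ψ : (Fin n → Bool) × Fin n → ℂ) :
    (Fin n → Bool) × Fin n → ℂ :=
  fun e => (2 / (n : ℂ)) * (∑ c' : Fin n, ψ (e.1, c')) - ψ e

/-- The query `Q ⊗ I`, flipping the sign at marked vertices. -/
noncomputable def HypercubeWalk.query (n : ℕ) (M : Finset (Fin n → Bool))
    (ψ : (Fin n → Bool) × Fin n → ℂ) : (Fin n → Bool) × Fin n → ℂ :=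
  fun e => if e.1 ∈ M then -ψ e else ψ e

/-- One step of the search algorithm, `U' = S · (I ⊗ C) · (Q ⊗ I)`. -/
noncomputable def HypercubeWalk.step (n : ℕ) (M : Finset (Fin n → Bool))
    (ψ : (Fin n → Bool) × Fin n → ℂ) : (Fin n → Bool) × Fin n → ℂ :=
  HypercubeWalk.shift n (HypercubeWalk.coin n (HypercubeWalk.query n M ψ))

namespace HypercubeWalkAux
open HypercubeWalk

lemma flip_flip (n : ℕ) (v : Fin n → Bool) (c : Fin n) :
    flipBit n (flipBit n v c) c = v := by
  funext x
  by_cases h : x = c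
  · subst h; simp [flipBit]
  · simp [flipBit, Function.update_of_ne h]

lemma flip_apply_ne (n : ℕ) (v : Fin n → Bool) (c d : Fin n) (h : d ≠ c) :
    flipBit n v c d = v d := by
  simp [flipBit, Function.update_of_ne h]

lemma flip_apply_self (n : ℕ) (v : Fin n → Bool) (c : Fin n) :
    flipBit n v c c = !(v c) := by simp [flipBit]

lemma flip_ne (n : ℕ) (v : Fin n → Bool) (c : Fin n) : flipBit n v c ≠ v := by
  intro h
  have := congrFun h c
  rw [flip_apply_self] at this
  exact (Bool.not_ne_self _ this).elim

lemma sum_if_zero (n : ℕ) [NeZero n] (x a : ℂ) :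
    ∑ c' : Fin n, (if c' = 0 then x else a) = x + ((n:ℂ)-1) * a := by
  rw [← Finset.add_sum_erase _ _ (Finset.mem_univ (0:Fin n)), if_pos rfl]
  rw [Finset.sum_congr rfl (fun y hy => if_neg (Finset.ne_of_mem_erase hy))]
  rw [Finset.sum_const, Finset.card_erase_of_mem (Finset.mem_univ _), Finset.card_univ,
    Fintype.card_fin, nsmul_eq_mul, Nat.cast_sub (NeZero.one_le)]
  push_cast; ring

end HypercubeWalkAux

/-- For two marked vertices `i` and `j` of the `n`-dimensional hypercube differing
exactly in bit `0`, the state with amplitude `-(n-1)a` on the two darts `|i, 0⟩`,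
`|j, 0⟩` of the shared edge and amplitude `a` on every other basis state is fixed by
one step of the search algorithm. -/
theorem hypercube_two_adjacent_marked_stationary (n : ℕ) [NeZero n] (hn : 2 ≤ n)
    (i j : Fin n → Bool) (hij : j = HypercubeWalk.flipBit n i 0) (a : ℂ) :
    HypercubeWalk.step n {i, j}
      (fun e => if (e.1 = i ∨ e.1 = j) ∧ e.2 = 0 then -((n : ℂ) - 1) * a else a)
    = fun e => if (e.1 = i ∨ e.1 = j) ∧ e.2 = 0 then -((n : ℂ) - 1) * a else a := by
  have hn0 : (n : ℂ) ≠ 0 := Nat.cast_ne_zero.mpr (NeZero.ne n)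
  have hijf : HypercubeWalk.flipBit n i 0 = j := hij.symm
  have hji : HypercubeWalk.flipBit n j 0 = i := by
    rw [hij, HypercubeWalkAux.flip_flip]
  funext e
  obtain ⟨v, c⟩ := e
  simp only [HypercubeWalk.step, HypercubeWalk.shift, HypercubeWalk.coin, HypercubeWalk.query,
    Finset.mem_insert, Finset.mem_singleton]
  by_cases hwm : HypercubeWalk.flipBit n v c = i ∨ HypercubeWalk.flipBit n v c = j
  · simp only [eq_true hwm, if_true, true_and]
    rw [Finset.sum_neg_distrib, HypercubeWalkAux.sum_if_zero]
    by_cases hc : c = 0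
    · subst hc
      have hv : v = i ∨ v = j := by
        rcases hwm with h | h
        · right; rw [hij, ← h, HypercubeWalkAux.flip_flip]
        · left; rw [← hji, ← h, HypercubeWalkAux.flip_flip]
      rw [if_pos (show (v = i ∨ v = j) ∧ (0 : Fin n) = 0 from ⟨hv, rfl⟩)]
      ring_nf
      simp
    · rw [if_neg hc, if_neg (fun h => hc h.2)]
      ring
  · simp only [if_neg hwm, eq_false hwm, false_and, if_false]
    rw [Finset.sum_const, Finset.card_univ, Fintype.card_fin, nsmul_eq_mul]
    have hv : ¬((v = i ∨ v = j) ∧ c = 0) := by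
      rintro ⟨hv, rfl⟩
      apply hwm
      rcases hv with rfl | rfl
      · exact Or.inr hijf
      · exact Or.inl hji
    rw [if_neg hv]
    field_simp
    ring
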